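/- Let H be a complex Hilbert space decomposed as the orthogonal direct sum of subspaces H_m indexed by m ∈ ℤ (via pairwise orthogonal projections P_m with ∑_{m∈ℤ} P_m = I strongly). Suppose a and c are bounded operators on H with ‖c‖ ≤ 1 such that P_m c P_n = (m − n) · (P_m a P_n) for all m, n ∈ ℤ (so c is the commutator [D, a] for the diagonal operator D = ∑ m P_m), and suppose P_m a P_m = 0 for all m ∈ ℤ. Then ‖a‖ ≤ π/√3. -/

import Mathlib

set_option maxHeartbeats 1000000

lemma hasSum_int_inv_sq :
    HasSum (fun d : ℤ => if d = 0 then (0:ℝ) else 1 / (d:ℝ)^2) (Real.pi^2/3) := by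
  set q : ℤ → ℝ := fun d => if d = 0 then (0:ℝ) else 1 / (d:ℝ)^2 with hq
  have h0 : HasSum (fun n : ℕ => (1:ℝ) / (n:ℝ)^2) (Real.pi^2/6) := hasSum_zeta_two
  have e1 : (fun n : ℕ => q (n : ℤ)) = fun n : ℕ => (1:ℝ) / (n:ℝ)^2 := by
    funext n
    rcases eq_or_ne n 0 with rfl | hn
    · simp [hq]
    · have : (n : ℤ) ≠ 0 := by exact_mod_cast hn
      simp [hq, this, hn]
  have h1 : HasSum (fun n : ℕ => q (n : ℤ)) (Real.pi^2/6) := e1 ▸ h0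
  have h3 : HasSum (fun n : ℕ => (1:ℝ) / ((n:ℝ) + 1)^2) (Real.pi^2/6) := by
    have h4 := (hasSum_nat_add_iff' (f := fun n : ℕ => (1:ℝ) / (n:ℝ)^2) 1).2 h0
    simpa using h4
  have e2 : (fun n : ℕ => q (-((n:ℤ) + 1))) = fun n : ℕ => (1:ℝ) / ((n:ℝ) + 1)^2 := by
    funext n
    have hne : -((n:ℤ) + 1) ≠ 0 := by omega
    simp only [hq, hne, if_false]
    push_cast
    ring_nf
  have h2 : HasSum (fun n : ℕ => q (-((n:ℤ) + 1))) (Real.pi^2/6) := e2 ▸ h3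
  have h5 := h1.of_nat_of_neg_add_one h2
  convert h5 using 1
  ring

/-- If `[D, a]` is bounded of norm at most `1` for the diagonal operator
`D = ∑ m P_m` over `ℤ`, and the main diagonal of `a` vanishes, then `‖a‖ ≤ π/√3`. -/
theorem norm_le_of_commutator_le_one_of_diagonal_zero
    (H : Type*) [NormedAddCommGroup H] [InnerProductSpace ℂ H] [CompleteSpace H]
    (P : ℤ → H →L[ℂ] H)
    (hPsa : ∀ m, IsSelfAdjoint (P m))
    (hPidem : ∀ m, (P m).comp (P m) = P m)
    (hPorth : ∀ m n : ℤ, m ≠ n → (P m).comp (P n) = 0)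
    (hPsum : ∀ v : H, HasSum (fun m => P m v) v)
    (a c : H →L[ℂ] H) (hc : ‖c‖ ≤ 1)
    (hcomm : ∀ m n : ℤ,
      (P m).comp (c.comp (P n)) = ((m - n : ℤ) : ℂ) • ((P m).comp (a.comp (P n))))
    (hdiag : ∀ m : ℤ, (P m).comp (a.comp (P m)) = 0) :
    ‖a‖ ≤ Real.pi / Real.sqrt 3 := by
  classical
  set C : ℝ := Real.pi / Real.sqrt 3 with hC
  have hCnonneg : 0 ≤ C := by positivity
  -- basic facts about the projections
  have hproj : ∀ m (v : H), P m (P m v) = P m v := by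
    intro m v
    have := ContinuousLinearMap.ext_iff.1 (hPidem m) v
    simpa using this
  have hadj : ∀ m (u w : H), (inner ℂ (P m u) w : ℂ) = inner ℂ u (P m w) := by
    intro m u w
    conv_lhs => rw [← (hPsa m).adjoint_eq]
    exact ContinuousLinearMap.adjoint_inner_left _ _ _
  -- Parseval-type identity
  have hnormsq : ∀ v : H, HasSum (fun m => ‖P m v‖^2) (‖v‖^2) := by
    intro v
    have h1 : HasSum (fun m => (inner ℂ v (P m v) : ℂ)) (inner ℂ v v) :=
      (innerSL ℂ v).hasSum (hPsum v)
    have h2 : ∀ m, (inner ℂ v (P m v) : ℂ) = ((‖P m v‖^2 : ℝ) : ℂ) := by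
      intro m
      have e : (inner ℂ v (P m v) : ℂ) = inner ℂ (P m v) (P m v) := by
        conv_lhs => rw [← hproj m v, ← hadj m v (P m v)]
      rw [e, inner_self_eq_norm_sq_to_K]
      norm_cast
    have h3 : (inner ℂ v v : ℂ) = ((‖v‖^2 : ℝ) : ℂ) := by
      rw [inner_self_eq_norm_sq_to_K]; norm_cast
    rw [h3] at h1
    simp_rw [h2] at h1
    exact Complex.hasSum_ofReal.mp h1
  have hcz : ∀ z : H, ‖c z‖ ≤ ‖z‖ := by
    intro z
    calc ‖c z‖ ≤ ‖c‖ * ‖z‖ := c.le_opNorm z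
    _ ≤ 1 * ‖z‖ := mul_le_mul_of_nonneg_right hc (norm_nonneg z)
    _ = ‖z‖ := one_mul _
  have key : ∀ x y : H, ‖(inner ℂ y (a x) : ℂ)‖ ≤ C * (‖y‖ * ‖x‖) := by
    intro x y
    set F : ℤ × ℤ → ℂ := fun p => inner ℂ (P p.2 y) (a (P p.1 x)) with hFdef
    set g : ℤ × ℤ → ℝ := fun p => ‖P p.2 (c (P p.1 x))‖ with hgdef
    set hfun : ℤ → ℝ := fun d => if d = 0 then 0 else 1 / |(d:ℝ)| with hhdef
    set f : ℤ × ℤ → ℝ := fun p => ‖P p.2 y‖ * hfun (p.2 - p.1) with hfdef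
    have hhnonneg : ∀ d, 0 ≤ hfun d := by
      intro d
      rcases eq_or_ne d 0 with rfl | hd
      · simp [hhdef]
      · simp only [hhdef, hd, if_false]
        positivity
    have hfnonneg : ∀ p, 0 ≤ f p := fun p => mul_nonneg (norm_nonneg _) (hhnonneg _)
    have hgnonneg : ∀ p, 0 ≤ g p := fun p => norm_nonneg _
    have hcomp : ∀ p : ℤ × ℤ, ((P p.2).comp (c.comp (P p.1))) x = P p.2 (c (P p.1 x)) := by
      intro p; simp [ContinuousLinearMap.comp_apply]
    have hFeq : ∀ p : ℤ × ℤ, F p = inner ℂ (P p.2 y) (((P p.2).comp (a.comp (P p.1))) x) := by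
      intro p
      show (inner ℂ (P p.2 y) (a (P p.1 x)) : ℂ) = _
      conv_lhs => rw [← hproj p.2 y]
      rw [hadj p.2 (P p.2 y) (a (P p.1 x))]
      simp [ContinuousLinearMap.comp_apply]
    have hFbound : ∀ p : ℤ × ℤ, ‖F p‖ ≤ f p * g p := by
      rintro ⟨n, m⟩
      rcases eq_or_ne m n with rfl | hmn
      · rw [hFeq]
        simp only [hdiag]
        simpa using mul_nonneg (hfnonneg (m, m)) (hgnonneg (m, m))
      · have hne : ((m - n : ℤ) : ℂ) ≠ 0 := by
          simp only [ne_eq, Int.cast_eq_zero, sub_eq_zero]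
          exact hmn
        have hca := ContinuousLinearMap.ext_iff.1 (hcomm m n) x
        have haeq : ((P m).comp (a.comp (P n))) x
            = ((m - n : ℤ) : ℂ)⁻¹ • ((P m).comp (c.comp (P n))) x := by
          rw [hca, ContinuousLinearMap.smul_apply, smul_smul, inv_mul_cancel₀ hne, one_smul]
        have hnorminv : ‖((m - n : ℤ) : ℂ)⁻¹‖ = hfun (m - n) := by
          have h5 : ((m - n : ℤ) : ℂ) = (((m - n : ℤ) : ℝ) : ℂ) := by push_cast; ring
          rw [norm_inv, h5, Complex.norm_real, Real.norm_eq_abs]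
          have h6 : (m - n : ℤ) ≠ 0 := sub_ne_zero.mpr hmn
          simp only [hhdef, h6, if_false]
          rw [one_div]
        calc ‖F (n, m)‖
            ≤ ‖P m y‖ * ‖((m - n : ℤ) : ℂ)⁻¹ • ((P m).comp (c.comp (P n))) x‖ := by
              rw [hFeq, haeq]; exact norm_inner_le_norm _ _
          _ = ‖P m y‖ * (‖((m - n : ℤ) : ℂ)⁻¹‖ * ‖((P m).comp (c.comp (P n))) x‖) := by
              rw [norm_smul]
          _ = f (n, m) * g (n, m) := by
              simp only [hnorminv, hfdef, hgdef, ContinuousLinearMap.comp_apply]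
              ring
    -- summability of g^2 and its total bound
    have hgrow : ∀ n : ℤ, HasSum (fun m => g (n, m)^2) (‖c (P n x)‖^2) := fun n =>
      hnormsq (c (P n x))
    have hcsq : ∀ n : ℤ, ‖c (P n x)‖^2 ≤ ‖P n x‖^2 := by
      intro n
      have := hcz (P n x)
      nlinarith [norm_nonneg (c (P n x))]
    have hrowsum : Summable (fun n : ℤ => ‖c (P n x)‖^2) :=
      Summable.of_nonneg_of_le (fun n => sq_nonneg _) hcsq (hnormsq x).summable
    have hgsq : Summable (fun p : ℤ×ℤ => g p ^ 2) := by
      refine (summable_prod_of_nonneg (fun p => sq_nonneg (g p))).mpr ⟨fun n => (hgrow n).summable, ?_⟩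
      have he : (fun n : ℤ => ∑' m, g (n, m)^2) = fun n => ‖c (P n x)‖^2 :=
        funext fun n => (hgrow n).tsum_eq
      rw [he]
      exact hrowsum
    have hBsum : ∑' p : ℤ×ℤ, g p ^2 ≤ ‖x‖^2 := by
      rw [Summable.tsum_prod' hgsq (fun n => (hgrow n).summable)]
      calc ∑' (n : ℤ), ∑' (m : ℤ), g (n, m)^2 = ∑' n : ℤ, ‖c (P n x)‖^2 := by
            congr 1; funext n; exact (hgrow n).tsum_eq
        _ ≤ ∑' n : ℤ, ‖P n x‖^2 := Summable.tsum_le_tsum hcsq hrowsum (hnormsq x).summable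
        _ = ‖x‖^2 := (hnormsq x).tsum_eq
    -- f^2 sums to ‖y‖^2 * (π^2/3)
    have hsqint : Summable (fun d : ℤ => if d = 0 then (0:ℝ) else 1/(d:ℝ)^2) :=
      hasSum_int_inv_sq.summable
    have hq : HasSum (fun r : ℤ×ℤ => ‖P r.1 y‖^2 * (if r.2 = 0 then (0:ℝ) else 1/(r.2:ℝ)^2))
        (‖y‖^2 * (Real.pi^2/3)) := by
      refine (hnormsq y).mul hasSum_int_inv_sq ?_
      apply Summable.mul_of_nonneg (hnormsq y).summable hsqint
      · intro m
        exact sq_nonneg _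
      · intro d
        by_cases hd : d = 0
        · simp [hd]
        · simp only [hd, if_false]
          positivity
    have hEquiv : HasSum (fun p : ℤ×ℤ => f p ^ 2) (‖y‖^2 * (Real.pi^2/3)) := by
      have h1 : HasSum (fun p : ℤ×ℤ =>
          ‖P p.2 y‖^2 * (if p.2 - p.1 = 0 then (0:ℝ) else 1/(((p.2 - p.1 : ℤ)):ℝ)^2))
          (‖y‖^2 * (Real.pi^2/3)) :=
        (Equiv.hasSum_iff (f := fun r : ℤ×ℤ =>
          ‖P r.1 y‖^2 * (if r.2 = 0 then (0:ℝ) else 1/(r.2:ℝ)^2))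
          (⟨fun p => (p.2, p.2 - p.1), fun r => (r.1 - r.2, r.1),
            fun p => by simp, fun r => by simp⟩ : ℤ×ℤ ≃ ℤ×ℤ)).mpr hq
      have hfe : (fun p : ℤ×ℤ => f p ^ 2) = fun p : ℤ×ℤ =>
          ‖P p.2 y‖^2 * (if p.2 - p.1 = 0 then (0:ℝ) else 1/(((p.2 - p.1 : ℤ)):ℝ)^2) := by
        funext p
        rcases eq_or_ne (p.2 - p.1) 0 with h | h
        · simp [hfdef, hhdef, h]
        · simp only [hfdef, hhdef, h, if_false]
          rw [mul_pow, div_pow, one_pow, sq_abs]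
      exact hfe ▸ h1
    -- summability of the product and of F
    have hfg_sum : Summable (fun p : ℤ×ℤ => f p * g p) := by
      refine Summable.of_nonneg_of_le (fun p => mul_nonneg (hfnonneg p) (hgnonneg p))
        (fun p => ?_) ((hEquiv.summable.add hgsq).div_const 2)
      have h0 := sq_nonneg (f p - g p)
      nlinarith
    have hFnorm_sum : Summable (fun p : ℤ×ℤ => ‖F p‖) :=
      Summable.of_nonneg_of_le (fun p => norm_nonneg _) hFbound hfg_sum
    have hFsum : Summable F := hFnorm_sum.of_norm
    -- row sums of F
    have hFrow : ∀ n : ℤ, HasSum (fun m => F (n, m)) (inner ℂ y (a (P n x)) : ℂ) := by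
      intro n
      have h1 : HasSum (fun m => (inner ℂ (a (P n x)) (P m y) : ℂ)) (inner ℂ (a (P n x)) y) :=
        (innerSL ℂ (a (P n x))).hasSum (hPsum y)
      have h2 := h1.map (starAddEquiv : ℂ ≃+ ℂ).toAddMonoidHom continuous_star
      simp only [AddEquiv.coe_toAddMonoidHom, starAddEquiv_apply, Function.comp_def,
        RCLike.star_def, inner_conj_symm] at h2
      exact h2
    have houter : HasSum (fun n => (inner ℂ y (a (P n x)) : ℂ)) (inner ℂ y (a x)) :=
      (innerSL ℂ y).hasSum (a.hasSum (hPsum x))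
    have hid : (inner ℂ y (a x) : ℂ) = ∑' p : ℤ×ℤ, F p := by
      rw [Summable.tsum_prod' hFsum (fun n => (hFrow n).summable)]
      calc (inner ℂ y (a x) : ℂ) = ∑' n : ℤ, inner ℂ y (a (P n x)) := houter.tsum_eq.symm
        _ = ∑' (n : ℤ), ∑' (m : ℤ), F (n, m) := by
            congr 1; funext n; exact (hFrow n).tsum_eq.symm
    -- Cauchy–Schwarz
    have hcs : ∀ s : Finset (ℤ×ℤ), ∑ p ∈ s, ‖F p‖ ≤
        Real.sqrt (‖y‖^2 * (Real.pi^2/3)) * ‖x‖ := by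
      intro s
      have h1 : ∑ p ∈ s, ‖F p‖ ≤ ∑ p ∈ s, f p * g p :=
        Finset.sum_le_sum fun p _ => hFbound p
      have h2 : (∑ p ∈ s, f p * g p)^2 ≤ (∑ p ∈ s, f p^2) * (∑ p ∈ s, g p^2) :=
        Finset.sum_mul_sq_le_sq_mul_sq s f g
      have h3 : ∑ p ∈ s, f p^2 ≤ ‖y‖^2 * (Real.pi^2/3) :=
        sum_le_hasSum s (fun p _ => sq_nonneg _) hEquiv
      have h4 : ∑ p ∈ s, g p^2 ≤ ‖x‖^2 :=
        le_trans (Summable.sum_le_tsum s (fun p _ => sq_nonneg _) hgsq) hBsum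
      have h5 : 0 ≤ ∑ p ∈ s, f p * g p :=
        Finset.sum_nonneg fun p _ => mul_nonneg (hfnonneg p) (hgnonneg p)
      have h6 : ∑ p ∈ s, f p * g p ≤ Real.sqrt ((‖y‖^2 * (Real.pi^2/3)) * ‖x‖^2) := by
        rw [← Real.sqrt_sq h5]
        apply Real.sqrt_le_sqrt
        have h7 : 0 ≤ ∑ p ∈ s, f p^2 := Finset.sum_nonneg fun p _ => sq_nonneg _
        have h8 : 0 ≤ ∑ p ∈ s, g p^2 := Finset.sum_nonneg fun p _ => sq_nonneg _
        nlinarith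
      have h7 : Real.sqrt ((‖y‖^2 * (Real.pi^2/3)) * ‖x‖^2)
          = Real.sqrt (‖y‖^2 * (Real.pi^2/3)) * ‖x‖ := by
        rw [Real.sqrt_mul (by positivity), Real.sqrt_sq (norm_nonneg x)]
      rw [h7] at h6
      linarith
    have htsumFnorm : ∑' p : ℤ×ℤ, ‖F p‖ ≤ Real.sqrt (‖y‖^2 * (Real.pi^2/3)) * ‖x‖ :=
      Summable.tsum_le_of_sum_le hFnorm_sum hcs
    have hsqrt : Real.sqrt (‖y‖^2 * (Real.pi^2/3)) = ‖y‖ * C := by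
      rw [Real.sqrt_mul (sq_nonneg _), Real.sqrt_sq (norm_nonneg y)]
      congr 1
      rw [hC, show Real.pi^2/3 = (Real.pi/Real.sqrt 3)^2 by
        rw [div_pow, Real.sq_sqrt (by norm_num : (0:ℝ) ≤ 3)]]
      exact Real.sqrt_sq (by positivity)
    calc ‖(inner ℂ y (a x) : ℂ)‖ = ‖∑' p : ℤ×ℤ, F p‖ := by rw [hid]
      _ ≤ ∑' p : ℤ×ℤ, ‖F p‖ := norm_tsum_le_tsum_norm hFnorm_sum
      _ ≤ Real.sqrt (‖y‖^2 * (Real.pi^2/3)) * ‖x‖ := htsumFnorm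
      _ = C * (‖y‖ * ‖x‖) := by rw [hsqrt]; ring
  -- conclude
  refine a.opNorm_le_bound hCnonneg (fun x => ?_)
  have hk := key x (a x)
  have h1 : ‖(inner ℂ (a x) (a x) : ℂ)‖ = ‖a x‖^2 := by
    rw [inner_self_eq_norm_sq_to_K]
    simp [norm_pow]
  rw [h1] at hk
  rcases eq_or_lt_of_le (norm_nonneg (a x)) with h0 | h0
  · rw [← h0]
    positivity
  · nlinarith
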